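/- Let 𝒟 be a domain space over an instance space X and let α ∈ (0,1). Let 𝓑 : X* → 𝒫(X) be a procedure mapping finite sample sequences to hypotheses such that: (i) for every domain D ∈ 𝒟 and every ε > 0, the probability over S ∼ D_in^n that R^in_D(𝓑(S)) > ε tends to 0 as n → ∞; and (ii) for every ε > 0 there exists a positive integer N such that for all n > N and all D ∈ 𝒟, the probability over S ∼ D_in^n that R^out_D(𝓑(S)) > ε is exactly 0. Then OOD detection for 𝒟 is non-uniformly learnable in 𝒫(X). -/

import Mathlib

open MeasureTheory ENNReal Set Filter

noncomputable section

/-- A domain over an instance space `X` is a pair of (Borel) measures on `X`: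
the ID distribution and the OOD distribution. -/
structure Domain (X : Type*) [MeasurableSpace X] where
  inD : Measure X
  outD : Measure X

namespace Domain

variable {X : Type*} [MeasurableSpace X]

/-- Both components of the domain are probability measures. -/
def IsProb (D : Domain X) : Prop :=
  IsProbabilityMeasure D.inD ∧ IsProbabilityMeasure D.outD

/-- The risk `R^α_D(h) = (1−α)·D_in(X∖h) + α·D_out(h)` of a hypothesis `h ⊆ X`. -/
def risk (D : Domain X) (α : ℝ) (h : Set X) : ℝ≥0∞ :=
  ENNReal.ofReal (1 - α) * D.inD hᶜ + ENNReal.ofReal α * D.outD h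

/-- The ID risk `R^in_D(h) = D_in(X∖h)`. -/
def inRisk (D : Domain X) (h : Set X) : ℝ≥0∞ := D.inD hᶜ

/-- The OOD risk `R^out_D(h) = D_out(h)`. -/
def outRisk (D : Domain X) (h : Set X) : ℝ≥0∞ := D.outD h

end Domain

/-- The distribution of `N` i.i.d. samples from `μ`. -/
def iidSamples {X : Type*} [MeasurableSpace X] (μ : Measure X) (N : ℕ) :
    Measure (Fin N → X) :=
  Measure.pi fun _ => μ

/-- A (deterministic) learning algorithm: given accuracy `ε`, confidence `δ`, a sample size
and a tuple of samples, it outputs a hypothesis. -/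
abbrev Learner (X : Type*) : Type _ := ℝ → ℝ → (n : ℕ) → (Fin n → X) → Set X

/-- Uniform learnability of OOD detection for the domain space `𝒟` in the hypothesis space `H`,
with a priori known OOD probability `α`: there are a sample-complexity function `N(ε,δ)` and a
learner which, for every `ε, δ ∈ (0,1/2)` and every domain `D ∈ 𝒟`, given `N(ε,δ)` i.i.d.
samples from `D_in`, outputs with probability at least `1−δ` a hypothesis in `H` whose risk is
within `ε` of the best risk achievable in `H`. -/
def UniformlyLearnable {X : Type*} [MeasurableSpace X]
    (𝒟 : Set (Domain X)) (H : Set (Set X)) (α : ℝ) : Prop :=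
  ∃ (N : ℝ → ℝ → ℕ) (A : Learner X),
    (∀ ε δ n S, A ε δ n S ∈ H) ∧
    ∀ ε δ : ℝ, 0 < ε → ε < 1/2 → 0 < δ → δ < 1/2 →
      ∀ D ∈ 𝒟,
        ENNReal.ofReal (1 - δ) ≤
          iidSamples D.inD (N ε δ)
            {S | D.risk α (A ε δ (N ε δ) S) ≤ (⨅ h' ∈ H, D.risk α h') + ENNReal.ofReal ε}

/-- Non-uniform learnability of OOD detection: as in `UniformlyLearnable`, except that the
number of samples the learner needs may depend on the domain `D ∈ 𝒟`. -/
def NonUniformlyLearnable {X : Type*} [MeasurableSpace X]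
    (𝒟 : Set (Domain X)) (H : Set (Set X)) (α : ℝ) : Prop :=
  ∃ A : Learner X,
    (∀ ε δ n S, A ε δ n S ∈ H) ∧
    ∀ ε δ : ℝ, 0 < ε → ε < 1/2 → 0 < δ → δ < 1/2 →
      ∀ D ∈ 𝒟, ∃ N : ℕ,
        ENNReal.ofReal (1 - δ) ≤
          iidSamples D.inD N
            {S | D.risk α (A ε δ N S) ≤ (⨅ h' ∈ H, D.risk α h') + ENNReal.ofReal ε}

/-- The support of a measure on a topological space: the set of points all of whose open
neighbourhoods have positive measure. -/
def msupport {X : Type*} [MeasurableSpace X] [TopologicalSpace X] (μ : Measure X) : Set X :=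
  {x | ∀ U : Set X, IsOpen U → x ∈ U → 0 < μ U}

/-- The Disjoint Supports Assumption. -/
def Domain.DSA {X : Type*} [MeasurableSpace X] [TopologicalSpace X] (D : Domain X) : Prop :=
  msupport D.inD ∩ msupport D.outD = ∅

/-- **A procedure with vanishing ID risk and eventually surely small OOD risk yields a
non-uniform learner.** -/
theorem procedure_to_nonuniform_learner
    {X : Type*} [MeasurableSpace X]
    (𝒟 : Set (Domain X)) (hprob : ∀ D ∈ 𝒟, D.IsProb)
    (α : ℝ) (hα : α ∈ Set.Ioo (0 : ℝ) 1)
    (B : (n : ℕ) → (Fin n → X) → Set X)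
    (hID : ∀ D ∈ 𝒟, ∀ ε : ℝ, 0 < ε →
      Filter.Tendsto
        (fun n => iidSamples D.inD n {S | ENNReal.ofReal ε < D.inRisk (B n S)})
        Filter.atTop (nhds 0))
    (hOOD : ∀ ε : ℝ, 0 < ε → ∃ N : ℕ, ∀ n > N, ∀ D ∈ 𝒟,
      iidSamples D.inD n {S | ENNReal.ofReal ε < D.outRisk (B n S)} = 0) :
    NonUniformlyLearnable 𝒟 Set.univ α := by

  obtain ⟨hα0, hα1⟩ := hα
  refine ⟨fun _ _ n S => B n S, fun _ _ _ _ => Set.mem_univ _, ?_⟩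
  intro ε δ hε hε2 hδ hδ2 D hD
  obtain ⟨N0, hN0⟩ := hOOD ε hε
  have hδ' : (0 : ℝ≥0∞) < ENNReal.ofReal δ := ENNReal.ofReal_pos.2 hδ
  obtain ⟨N1, hN1⟩ := Filter.eventually_atTop.1 ((hID D hD ε hε).eventually_lt_const hδ')
  set n := max N0 N1 + 1 with hn
  refine ⟨n, ?_⟩
  haveI h1 : IsProbabilityMeasure D.inD := (hprob D hD).1
  haveI : IsProbabilityMeasure (iidSamples D.inD n) := by
    unfold iidSamples; infer_instance
  set μ := iidSamples D.inD n with hμ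
  set good := {S : Fin n → X |
      D.risk α (B n S) ≤ (⨅ h' ∈ (Set.univ : Set (Set X)), D.risk α h') + ENNReal.ofReal ε}
    with hgood
  have hsub : goodᶜ ⊆ {S | ENNReal.ofReal ε < D.inRisk (B n S)} ∪
      {S | ENNReal.ofReal ε < D.outRisk (B n S)} := by
    intro S hS
    by_contra hc
    simp only [Set.mem_union, Set.mem_setOf_eq, not_or, not_lt] at hc
    obtain ⟨hin, hout⟩ := hc
    apply hS
    have hrisk : D.risk α (B n S) ≤ ENNReal.ofReal ε := by
      have : D.risk α (B n S) ≤ ENNReal.ofReal (1 - α) * ENNReal.ofReal ε +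
          ENNReal.ofReal α * ENNReal.ofReal ε := by
        exact add_le_add (mul_le_mul_right hin _) (mul_le_mul_right hout _)
      calc D.risk α (B n S) ≤ _ := this
        _ = (ENNReal.ofReal (1 - α) + ENNReal.ofReal α) * ENNReal.ofReal ε := by ring
        _ = ENNReal.ofReal 1 * ENNReal.ofReal ε := by
            rw [← ENNReal.ofReal_add (by linarith) (le_of_lt hα0)]
            norm_num
        _ = ENNReal.ofReal ε := by simp
    exact hrisk.trans (le_add_self)
  have hbad : μ goodᶜ ≤ ENNReal.ofReal δ := by
    calc μ goodᶜ ≤ μ {S | ENNReal.ofReal ε < D.inRisk (B n S)} +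
        μ {S | ENNReal.ofReal ε < D.outRisk (B n S)} :=
          (measure_mono hsub).trans (measure_union_le _ _)
      _ ≤ ENNReal.ofReal δ + 0 := by
          refine add_le_add ?_ ?_
          · exact le_of_lt (hN1 n (by omega))
          · exact le_of_eq (hN0 n (by omega) D hD)
      _ = ENNReal.ofReal δ := by simp
  have h1le : (1 : ℝ≥0∞) ≤ μ good + ENNReal.ofReal δ := by
    calc (1 : ℝ≥0∞) = μ Set.univ := (measure_univ).symm
      _ = μ (good ∪ goodᶜ) := by rw [Set.union_compl_self]
      _ ≤ μ good + μ goodᶜ := measure_union_le _ _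
      _ ≤ μ good + ENNReal.ofReal δ := add_le_add_right hbad _
  have : ENNReal.ofReal (1 - δ) = 1 - ENNReal.ofReal δ := by
    rw [ENNReal.ofReal_sub 1 (le_of_lt hδ), ENNReal.ofReal_one]
  rw [this]
  exact tsub_le_iff_right.2 h1le
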